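/- The function g(μ, p) = 1 + (1−p)e^{−μ} + p e^{−μ/2} equals the fraction of non-error single-click plus no-click weight in the simulation model, and the worst-case X probability p̄_x(μ,p) = (1 − p − e^{−μ} + p e^{−μ/2})/(1 − e^{−μ}) satisfies: for fixed μ > 0, p̄_x is strictly decreasing in p ∈ [0,1], with p̄_x(μ,0) = 1 and p̄_x(μ,1) = (e^{−μ/2} − e^{−μ})/(1 − e^{−μ}) < 1/2. -/

import Mathlib

open Real

/-- the non-error single-click plus no-click weight in the simulation model -/
noncomputable def g (μ p : ℝ) : ℝ := 1 + (1 - p) * Real.exp (-μ) + p * Real.exp (-μ/2)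

/-- the worst-case (lower-bound) X-basis probability from the squashing-model
constraint, `p̄ₓ(μ,p) = (1 - p - e^{-μ} + p e^{-μ/2})/(1 - e^{-μ})` -/
noncomputable def pbarX (μ p : ℝ) : ℝ :=
  (1 - p - Real.exp (-μ) + p * Real.exp (-μ/2)) / (1 - Real.exp (-μ))

/-- for fixed `μ > 0`, `p̄ₓ(μ,·)` is strictly decreasing on
`[0,1]`, with `p̄ₓ(μ,0) = 1` and `p̄ₓ(μ,1) = (e^{-μ/2}-e^{-μ})/(1-e^{-μ}) < 1/2`. -/
theorem stmt16 (μ : ℝ) (hμ : 0 < μ) :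
    StrictAntiOn (fun p => pbarX μ p) (Set.Icc 0 1) ∧
    pbarX μ 0 = 1 ∧
    pbarX μ 1 = (Real.exp (-μ/2) - Real.exp (-μ)) / (1 - Real.exp (-μ)) ∧
    (Real.exp (-μ/2) - Real.exp (-μ)) / (1 - Real.exp (-μ)) < 1/2 := by
  have ha1 : Real.exp (-μ/2) < 1 := by
    rw [Real.exp_lt_one_iff]; linarith
  have hb1 : Real.exp (-μ) < 1 := by
    rw [Real.exp_lt_one_iff]; linarith
  have hapos : 0 < Real.exp (-μ/2) := Real.exp_pos _
  have hden : 0 < 1 - Real.exp (-μ) := by linarith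
  have hab : Real.exp (-μ) = Real.exp (-μ/2) * Real.exp (-μ/2) := by
    rw [← Real.exp_add]; ring_nf
  refine ⟨?_, ?_, ?_, ?_⟩
  · intro x _ y _ hxy
    simp only [pbarX]
    rw [div_lt_div_iff₀ hden hden]
    nlinarith [mul_pos (sub_pos.mpr hxy) (sub_pos.mpr ha1)]
  · unfold pbarX; field_simp; ring
  · unfold pbarX; ring_nf
  · rw [div_lt_iff₀ hden]
    nlinarith [sq_nonneg (Real.exp (-μ/2) - 1)]
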